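/- Let r ≥ 2 and a ≥ r+2, and let H be a graph on n = a·r vertices with D(H,x) = D(K_r(a),x). Define an auxiliary graph F on V(H) whose edges are the pairs {u,v} that form a dominating set of H. Then F is K_{r+1}-free. -/

import Mathlib

/-- `S` dominates `G`: every vertex is in `S` or adjacent to a member of `S`. -/
def Dominates {V : Type*} (G : SimpleGraph V) (S : Set V) : Prop :=
  ∀ v : V, v ∈ S ∨ ∃ u ∈ S, G.Adj u v

/-- number of dominating sets of cardinality `i`. -/
noncomputable def numDom {V : Type*} [Fintype V] (G : SimpleGraph V) (i : ℕ) : ℕ :=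
  Nat.card {S : Finset V // S.card = i ∧ Dominates G ↑S}

/-- the domination polynomial `D(G,x) = Σ_{i=1}^{n} d(G,i) x^i`. -/
noncomputable def domPoly {V : Type*} [Fintype V] (G : SimpleGraph V) : Polynomial ℤ :=
  ∑ i ∈ Finset.Icc 1 (Fintype.card V), (numDom G i : Polynomial ℤ) * Polynomial.X ^ i

/-- the join of two vertex-disjoint graphs. -/
def GJoin {α β : Type*} (G : SimpleGraph α) (H : SimpleGraph β) : SimpleGraph (α ⊕ β) where
  Adj x y := match x, y with
    | Sum.inl a, Sum.inl b => G.Adj a b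
    | Sum.inr a, Sum.inr b => H.Adj a b
    | _, _ => True
  symm := ⟨by rintro (a|a) (b|b) h <;> simp_all [SimpleGraph.adj_comm]⟩
  loopless := ⟨by rintro (a|a) h <;> simp_all⟩

/-- `H_t(a)`: a copy of `K_a` and a copy of `K_{a+t}`, connected by a matching
from `K_a` into `K_{a+t}`. -/
def Hgraph (a t : ℕ) : SimpleGraph (Fin a ⊕ Fin (a + t)) where
  Adj x y := match x, y with
    | Sum.inl i, Sum.inl j => i ≠ j
    | Sum.inr i, Sum.inr j => i ≠ j
    | Sum.inl i, Sum.inr j => (j : ℕ) = (i : ℕ)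
    | Sum.inr i, Sum.inl j => (i : ℕ) = (j : ℕ)
  symm := ⟨by rintro (i|i) (j|j) h <;> simp_all <;> omega⟩
  loopless := ⟨by rintro (i|i) h <;> simp_all⟩

/-- The auxiliary graph on `V(H)` whose edges are the dominating pairs of `H`. -/
def auxGraph {W : Type*} (H : SimpleGraph W) : SimpleGraph W where
  Adj u v := u ≠ v ∧ Dominates H {u, v}
  symm := ⟨by rintro u v ⟨h1, h2⟩; exact ⟨h1.symm, by rwa [Set.pair_comm]⟩⟩
  loopless := ⟨fun u h => h.1 rfl⟩

open scoped Classical in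
/-- The set of vertices not dominated by `v`. -/
noncomputable def Yset {V : Type*} [Fintype V] (G : SimpleGraph V) (v : V) : Finset V :=
  Finset.univ.filter (fun w => w ≠ v ∧ ¬ G.Adj v w)

lemma mem_Yset {V : Type*} [Fintype V] (G : SimpleGraph V) (v w : V) :
    w ∈ Yset G v ↔ w ≠ v ∧ ¬ G.Adj v w := by
  simp [Yset]

lemma not_dominates_iff {V : Type*} [Fintype V] (G : SimpleGraph V) (S : Finset V) :
    ¬ Dominates G ↑S ↔ ∃ v, S ⊆ Yset G v := by
  constructor
  · intro h
    simp only [Dominates, not_forall] at h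
    obtain ⟨v, hv⟩ := h
    push_neg at hv
    refine ⟨v, fun u hu => ?_⟩
    rw [mem_Yset]
    refine ⟨?_, fun hadj => hv.2 u (by simpa using hu) hadj.symm⟩
    rintro rfl; exact hv.1 (by simpa using hu)
  · rintro ⟨v, hv⟩ h
    rcases h v with hv' | ⟨u, hu, hadj⟩
    · have := (mem_Yset G v v).mp (hv (by simpa using hv'))
      exact this.1 rfl
    · have := (mem_Yset G v u).mp (hv (by simpa using hu))
      exact this.2 hadj.symm

open scoped Classical in
lemma numDom_eq_card {V : Type*} [Fintype V] (G : SimpleGraph V) (i : ℕ) :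
    numDom G i =
      (Finset.univ.filter (fun S : Finset V => S.card = i ∧ Dominates G ↑S)).card := by
  rw [numDom, Nat.card_eq_fintype_card, Fintype.card_subtype]

open scoped Classical in
lemma card_filter_card_eq {V : Type*} [Fintype V] (i : ℕ) :
    (Finset.univ.filter (fun S : Finset V => S.card = i)).card =
      (Fintype.card V).choose i := by
  have h := Finset.card_powersetCard i (Finset.univ : Finset V)
  rw [Finset.powersetCard_eq_filter, Finset.powerset_univ, Finset.card_univ] at h
  exact h

open scoped Classical in
lemma numDom_add_nondom {V : Type*} [Fintype V] (G : SimpleGraph V) (i : ℕ) :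
    numDom G i +
      (Finset.univ.filter (fun S : Finset V => S.card = i ∧ ¬ Dominates G ↑S)).card
      = (Fintype.card V).choose i := by
  rw [numDom_eq_card, ← card_filter_card_eq (V := V) i,
    ← Finset.card_filter_add_card_filter_not
      (s := Finset.univ.filter (fun S : Finset V => S.card = i))
      (fun S => Dominates G ↑S), Finset.filter_filter, Finset.filter_filter]

lemma domPoly_coeff {V : Type*} [Fintype V] (G : SimpleGraph V) {i : ℕ}
    (h1 : 1 ≤ i) (h2 : i ≤ Fintype.card V) :
    (domPoly G).coeff i = numDom G i := by
  rw [domPoly, Polynomial.finset_sum_coeff]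
  rw [Finset.sum_eq_single i]
  · simp [Polynomial.coeff_X_pow]
  · intro b _ hb
    simp [Polynomial.coeff_X_pow, Ne.symm hb]
  · intro h
    simp [Finset.mem_Icc, h1, h2] at h

section KSec
variable {r a : ℕ}

local notation "K" => SimpleGraph.completeMultipartiteGraph (fun _ : Fin r => Fin a)

lemma K_adj (x y : (_ : Fin r) × Fin a) : (K).Adj x y ↔ x.1 ≠ y.1 := by
  simp [SimpleGraph.completeMultipartiteGraph]

lemma card_VK : Fintype.card ((_ : Fin r) × Fin a) = a * r := by
  simp [Fintype.card_sigma, mul_comm]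

open scoped Classical in
lemma Yset_K (v : (_ : Fin r) × Fin a) :
    Yset K v = (Finset.univ.filter (fun w : (_ : Fin r) × Fin a => w.1 = v.1)).erase v := by
  ext w
  simp only [mem_Yset, Finset.mem_erase, Finset.mem_filter, Finset.mem_univ, true_and, K_adj]
  tauto

open scoped Classical in
lemma card_fiber (v : (_ : Fin r) × Fin a) :
    (Finset.univ.filter (fun w : (_ : Fin r) × Fin a => w.1 = v.1)).card = a := by
  have himg : Finset.univ.filter (fun w : (_ : Fin r) × Fin a => w.1 = v.1) =
      Finset.univ.image (fun j : Fin a => (⟨v.1, j⟩ : (_ : Fin r) × Fin a)) := by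
    ext w
    simp only [Finset.mem_filter, Finset.mem_univ, true_and, Finset.mem_image]
    constructor
    · rintro h
      exact ⟨w.2, by cases w; simp_all⟩
    · rintro ⟨j, rfl⟩; rfl
  rw [himg, Finset.card_image_of_injective _ (fun j j' h => by simpa using h)]
  simp

open scoped Classical in
lemma card_Yset_K (v : (_ : Fin r) × Fin a) : (Yset K v).card = a - 1 := by
  rw [Yset_K, Finset.card_erase_of_mem (by simp), card_fiber]

open scoped Classical in
lemma Yset_K_inj (ha2 : 2 ≤ a) {u v : (_ : Fin r) × Fin a}
    (h : Yset K u = Yset K v) : u = v := by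
  by_contra huv
  have hne : (Yset K v).Nonempty := by
    rw [← Finset.card_pos, card_Yset_K]; omega
  obtain ⟨w, hw⟩ := hne
  have hw1 : w.1 = v.1 := by
    have := (mem_Yset _ _ _).mp hw
    rw [K_adj] at this
    exact not_not.mp (fun hne' => this.2 (Ne.symm hne'))
  have hw2 : w.1 = u.1 := by
    have := (mem_Yset _ _ _).mp (h ▸ hw)
    rw [K_adj] at this
    exact not_not.mp (fun hne' => this.2 (Ne.symm hne'))
  have hu : u ∈ Yset K v := by
    rw [mem_Yset, K_adj]
    exact ⟨huv, by rw [not_not, ← hw2, hw1]⟩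
  have : u ∈ Yset K u := h ▸ hu
  exact ((mem_Yset _ _ _).mp this).1 rfl

end KSec

section KSec2
variable {r a : ℕ}

local notation "K" => SimpleGraph.completeMultipartiteGraph (fun _ : Fin r => Fin a)

open scoped Classical in
lemma numDom_K_a (ha1 : 1 ≤ a) : numDom K a = (a * r).choose a := by
  have h := numDom_add_nondom K a
  rw [card_VK] at h
  have hz : (Finset.univ.filter
      (fun S : Finset ((_ : Fin r) × Fin a) => S.card = a ∧ ¬ Dominates K ↑S)) = ∅ := by
    rw [Finset.filter_eq_empty_iff]
    rintro S - ⟨hScard, hSnd⟩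
    obtain ⟨v, hv⟩ := (not_dominates_iff _ _).mp hSnd
    have := Finset.card_le_card hv
    rw [hScard, card_Yset_K] at this
    omega
  rw [hz] at h
  simpa using h

open scoped Classical in
lemma numDom_K_pred (ha2 : 2 ≤ a) :
    numDom K (a - 1) + a * r = (a * r).choose (a - 1) := by
  have h := numDom_add_nondom K (a - 1)
  rw [card_VK] at h
  have himg : (Finset.univ.filter
      (fun S : Finset ((_ : Fin r) × Fin a) => S.card = a - 1 ∧ ¬ Dominates K ↑S)) =
      Finset.univ.image (fun v => Yset K v) := by
    ext S
    simp only [Finset.mem_filter, Finset.mem_univ, true_and, Finset.mem_image]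
    constructor
    · rintro ⟨hScard, hSnd⟩
      obtain ⟨v, hv⟩ := (not_dominates_iff _ _).mp hSnd
      refine ⟨v, (Finset.eq_of_subset_of_card_le hv ?_).symm⟩
      rw [hScard, card_Yset_K]
    · rintro ⟨v, rfl⟩
      refine ⟨card_Yset_K v, ?_⟩
      rw [not_dominates_iff]
      exact ⟨v, Finset.Subset.refl _⟩
  rw [himg, Finset.card_image_of_injective _ (fun u v h' => Yset_K_inj ha2 h')] at h
  rw [Finset.card_univ, card_VK] at h
  exact h

end KSec2

theorem auxGraph_cliqueFree_aux
 {r a : ℕ} (hr : 2 ≤ r) (ha : r + 2 ≤ a) {W : Type*}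
    [Fintype W] (H : SimpleGraph W) (hcard : Fintype.card W = a * r)
    (hD : domPoly H = domPoly (SimpleGraph.completeMultipartiteGraph fun _ : Fin r => Fin a)) :
    ∀ t : Finset W, ¬ (auxGraph H).IsNClique (r + 1) t := by
  classical
  set K := SimpleGraph.completeMultipartiteGraph (fun _ : Fin r => Fin a) with hK
  have hn : Fintype.card ((_ : Fin r) × Fin a) = a * r := card_VK
  have haar : a ≤ a * r := Nat.le_mul_of_pos_right a (by omega)
  have hcoeff : ∀ i, 1 ≤ i → i ≤ a * r → numDom H i = numDom K i := by
    intro i h1 h2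
    have hco := congrArg (fun p => Polynomial.coeff p i) hD
    rw [domPoly_coeff H h1 (by rw [hcard]; exact h2),
      domPoly_coeff _ h1 (by rw [hn]; exact h2)] at hco
    exact_mod_cast hco
  have h1a : 1 ≤ a := by omega
  have ha2 : 2 ≤ a := by omega
  have hHa : numDom H a = (a * r).choose a := by
    rw [hcoeff a h1a haar]; exact numDom_K_a h1a
  have hall : ∀ S : Finset W, S.card = a → Dominates H ↑S := by
    intro S hS
    by_contra hnd
    have h := numDom_add_nondom H a
    rw [hcard, hHa] at h
    have h0 : (Finset.univ.filter
        (fun S : Finset W => S.card = a ∧ ¬ Dominates H ↑S)).card = 0 := by omega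
    rw [Finset.card_eq_zero, Finset.filter_eq_empty_iff] at h0
    exact h0 (Finset.mem_univ S) ⟨hS, hnd⟩
  have hYle : ∀ v : W, (Yset H v).card ≤ a - 1 := by
    intro v
    by_contra hlt
    push_neg at hlt
    have haY : a ≤ (Yset H v).card := by omega
    obtain ⟨S, hSsub, hScard⟩ := Finset.exists_subset_card_eq haY
    exact (not_dominates_iff H S).mpr ⟨v, hSsub⟩ (hall S hScard)
  have hpred : numDom H (a - 1) + a * r = (a * r).choose (a - 1) := by
    rw [hcoeff (a - 1) (by omega) (by omega)]
    exact numDom_K_pred ha2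
  have h := numDom_add_nondom H (a - 1)
  rw [hcard] at h
  have hcnd : (Finset.univ.filter
      (fun S : Finset W => S.card = a - 1 ∧ ¬ Dominates H ↑S)).card = a * r := by omega
  have hYeq : ∀ v : W, (Yset H v).card = a - 1 := by
    have hsub : (Finset.univ.filter
        (fun S : Finset W => S.card = a - 1 ∧ ¬ Dominates H ↑S)) ⊆
        (Finset.univ.filter (fun v : W => (Yset H v).card = a - 1)).image (Yset H) := by
      intro S hS
      simp only [Finset.mem_filter, Finset.mem_univ, true_and] at hS
      obtain ⟨v, hv⟩ := (not_dominates_iff H S).mp hS.2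
      have hSY : S = Yset H v :=
        Finset.eq_of_subset_of_card_le hv (by rw [hS.1]; exact hYle v)
      rw [Finset.mem_image]
      exact ⟨v, by simp [← hSY, hS.1], hSY.symm⟩
    have hle1 := Finset.card_le_card hsub
    have hle2 := Finset.card_image_le
      (s := Finset.univ.filter (fun v : W => (Yset H v).card = a - 1)) (f := Yset H)
    have hle3 : (Finset.univ.filter (fun v : W => (Yset H v).card = a - 1)).card ≤ a * r := by
      rw [← hcard, ← Finset.card_univ]
      exact Finset.card_le_card (Finset.filter_subset _ _)
    have hcf : (Finset.univ.filter (fun v : W => (Yset H v).card = a - 1)).card = a * r := by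
      omega
    have huniv := Finset.eq_univ_of_card _ (by rw [hcf, hcard])
    rw [Finset.eq_univ_iff_forall] at huniv
    intro v
    exact (Finset.mem_filter.mp (huniv v)).2
  intro t ht
  obtain ⟨htc, htcard⟩ := ht
  have hdisj : ∀ u ∈ t, ∀ v ∈ t, u ≠ v → Disjoint (Yset H u) (Yset H v) := by
    intro u hu v hv huv
    have hadj : (auxGraph H).Adj u v :=
      htc (Finset.mem_coe.mpr hu) (Finset.mem_coe.mpr hv) huv
    obtain ⟨-, hdom⟩ : u ≠ v ∧ Dominates H {u, v} := hadj
    rw [Finset.disjoint_left]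
    intro w hwu hwv
    obtain ⟨hw1, hw2⟩ := (mem_Yset H u w).mp hwu
    obtain ⟨hw3, hw4⟩ := (mem_Yset H v w).mp hwv
    rcases hdom w with hmem | ⟨x, hx, hadjx⟩
    · rcases hmem with h' | h'
      · exact hw1 h'
      · exact hw3 h'
    · rcases hx with h' | h'
      · exact hw2 (h' ▸ hadjx)
      · exact hw4 (h' ▸ hadjx)
  have hsum := Finset.card_biUnion hdisj
  have hsv : ∑ u ∈ t, (Yset H u).card = (r + 1) * (a - 1) := by
    rw [Finset.sum_congr rfl (fun u _ => hYeq u), Finset.sum_const, htcard, smul_eq_mul]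
  have hle : (t.biUnion (Yset H)).card ≤ a * r := by
    rw [← hcard, ← Finset.card_univ]
    exact Finset.card_le_card (Finset.subset_univ _)
  have hfin : (r + 1) * (a - 1) ≤ a * r := by omega
  obtain ⟨c, rfl⟩ : ∃ c, a = c + 1 := ⟨a - 1, by omega⟩
  simp only [Nat.add_sub_cancel] at hfin
  nlinarith

/-- If `r ≥ 2`, `a ≥ r+2` and `D(H,x) = D(K_r(a),x)`, then the auxiliary graph of
dominating pairs of `H` is `K_{r+1}`-free. -/
theorem auxGraph_cliqueFree {r a : ℕ} (hr : 2 ≤ r) (ha : r + 2 ≤ a) {W : Type*}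
    [Fintype W] (H : SimpleGraph W) (hcard : Fintype.card W = a * r)
    (hD : domPoly H = domPoly (SimpleGraph.completeMultipartiteGraph fun _ : Fin r => Fin a)) :
    (auxGraph H).CliqueFree (r + 1) :=
  auxGraph_cliqueFree_aux hr ha H hcard hD
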